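/- Let U ⊆ ℝ² be open, let n : U → ℝ³ be C¹ with |n| > 0 on U, and let V : U → ℝ be C¹. Then at every point of U one has the identity |n| G[n/|n|] = ∇(1/|n|)·(½ ∇(|n|²) + |n|² ∇V) + (1/|n|)(½ ∇(|n|²)·∇V + G[n]). (In particular the right-hand side does not depend on V.) -/

import Mathlib

open Real Set

/-- Spatial partial derivative `∂_k` on `ℝ²` of a scalar field, with the
convention `∂₃ = 0` (the index `k = 2`, i.e. the third one, gives `0`). -/
noncomputable def pd (k : Fin 3) (f : (Fin 2 → ℝ) → ℝ) (x : Fin 2 → ℝ) : ℝ :=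
  fderiv ℝ f x (fun s : Fin 2 => if (s : ℕ) = (k : ℕ) then 1 else 0)

/-- `curl v = (∂₂v₃, −∂₁v₃, ∂₁v₂ − ∂₂v₁)` of a 3-component field on `ℝ²`. -/
noncomputable def curl3 (v : (Fin 2 → ℝ) → Fin 3 → ℝ) (x : Fin 2 → ℝ) : Fin 3 → ℝ :=
  ![pd 1 (fun y => v y 2) x, -(pd 0 (fun y => v y 2) x),
    pd 0 (fun y => v y 1) x - pd 1 (fun y => v y 0) x]

/-- `G[v] = ‖∇v‖² + 2 v·curl v + 2|v|²`. -/
noncomputable def Gfun (v : (Fin 2 → ℝ) → Fin 3 → ℝ) (x : Fin 2 → ℝ) : ℝ :=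
  (∑ s : Fin 2, ∑ j : Fin 3, (pd s.castSucc (fun y => v y j) x) ^ 2)
    + 2 * ∑ j : Fin 3, v x j * curl3 v x j
    + 2 * ∑ j : Fin 3, (v x j) ^ 2

/-- The gradient `∇f = (∂₁f, ∂₂f)` of a scalar field on `ℝ²`. -/
noncomputable def grad (f : (Fin 2 → ℝ) → ℝ) (x : Fin 2 → ℝ) : Fin 2 → ℝ :=
  fun s => pd s.castSucc f x

/-- Euclidean dot product on `ℝ²`. -/
def dot2 (a b : Fin 2 → ℝ) : ℝ := ∑ s : Fin 2, a s * b s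


private lemma pd_hasFDeriv {f : (Fin 2 → ℝ) → ℝ} {L : (Fin 2 → ℝ) →L[ℝ] ℝ}
    {x : Fin 2 → ℝ} (h : HasFDerivAt f L x) (k : Fin 3) :
    pd k f x = L (fun s : Fin 2 => if (s : ℕ) = (k : ℕ) then 1 else 0) := by
  rw [pd, h.fderiv]

set_option maxHeartbeats 2000000 in
/-- For `U ⊆ ℝ²` open, `n : U → ℝ³` of class `C¹` with `|n| > 0` on `U`, and
`V : U → ℝ` of class `C¹`, at every point of `U`:
`|n| G[n/|n|] = ∇(1/|n|)·(½∇(|n|²) + |n|²∇V) + (1/|n|)(½∇(|n|²)·∇V + G[n])`. -/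
theorem normn_G_unit_identity (U : Set (Fin 2 → ℝ)) (hU : IsOpen U)
    (n : (Fin 2 → ℝ) → Fin 3 → ℝ) (V : (Fin 2 → ℝ) → ℝ)
    (hn : ContDiffOn ℝ 1 n U) (hV : ContDiffOn ℝ 1 V U)
    (hpos : ∀ x ∈ U, 0 < Real.sqrt (∑ j, (n x j) ^ 2)) :
    ∀ x ∈ U,
      Real.sqrt (∑ j, (n x j) ^ 2)
          * Gfun (fun y j => n y j / Real.sqrt (∑ i, (n y i) ^ 2)) x
        = dot2 (grad (fun y => 1 / Real.sqrt (∑ j, (n y j) ^ 2)) x)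
               (fun s => (1 / 2) * grad (fun y => ∑ j, (n y j) ^ 2) x s
                  + (∑ j, (n x j) ^ 2) * grad V x s)
          + (1 / Real.sqrt (∑ j, (n x j) ^ 2))
            * ((1 / 2) * dot2 (grad (fun y => ∑ j, (n y j) ^ 2) x) (grad V x)
               + Gfun n x) := by
  intro x hx
  have hmem : U ∈ nhds x := hU.mem_nhds hx
  have hdn : DifferentiableAt ℝ n x := (hn.contDiffAt hmem).differentiableAt one_ne_zero
  have hdj : ∀ j : Fin 3, DifferentiableAt ℝ (fun y => n y j) x := fun j =>
    (differentiableAt_pi.mp hdn) j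
  have hD : ∀ j : Fin 3, HasFDerivAt (fun y => n y j) (fderiv ℝ (fun y => n y j) x) x :=
    fun j => (hdj j).hasFDerivAt
  have hr : 0 < Real.sqrt (∑ j, (n x j) ^ 2) := hpos x hx
  have hQpos : 0 < ∑ j, (n x j) ^ 2 := Real.sqrt_pos.mp hr
  have hQ : HasFDerivAt (fun y => ∑ j, (n y j) ^ 2)
      (∑ j, (2 * n x j) • fderiv ℝ (fun y => n y j) x) x := by
    refine HasFDerivAt.fun_sum fun j _ => ?_
    have h2 : (fun y => (n y j) ^ 2) = fun y => n y j * n y j := by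
      funext y; ring
    rw [h2]
    have h3 := (hD j).fun_mul (hD j)
    refine h3.congr_fderiv ?_
    ext v
    simp [two_mul, add_mul]
  have hs : HasFDerivAt (fun y => Real.sqrt (∑ j, (n y j) ^ 2))
      ((1 / (2 * Real.sqrt (∑ j, (n x j) ^ 2))) •
        ∑ j, (2 * n x j) • fderiv ℝ (fun y => n y j) x) x :=
    hQ.sqrt hQpos.ne'
  have hinv : HasFDerivAt (fun y => (Real.sqrt (∑ j, (n y j) ^ 2))⁻¹)
      ((-(Real.sqrt (∑ j, (n x j) ^ 2) ^ 2)⁻¹) •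
        ((1 / (2 * Real.sqrt (∑ j, (n x j) ^ 2))) •
          ∑ j, (2 * n x j) • fderiv ℝ (fun y => n y j) x)) x := by
    have h4 := (hasDerivAt_inv hr.ne').comp_hasFDerivAt x hs
    simp only [Function.comp_def] at h4
    refine h4.congr_fderiv ?_
    ext v
    simp
  have hu : ∀ j : Fin 3, HasFDerivAt (fun y => n y j / Real.sqrt (∑ i, (n y i) ^ 2))
      ((n x j) • ((-(Real.sqrt (∑ i, (n x i) ^ 2) ^ 2)⁻¹) •
          ((1 / (2 * Real.sqrt (∑ i, (n x i) ^ 2))) •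
            ∑ i, (2 * n x i) • fderiv ℝ (fun y => n y i) x))
        + (Real.sqrt (∑ i, (n x i) ^ 2))⁻¹ • fderiv ℝ (fun y => n y j) x) x := by
    intro j
    have h5 := (hD j).fun_mul hinv
    simpa [div_eq_mul_inv] using h5
  have hpdQ : ∀ k : Fin 3, pd k (fun y => ∑ j, (n y j) ^ 2) x
      = ∑ i, 2 * n x i * pd k (fun y => n y i) x := by
    intro k
    rw [pd_hasFDeriv hQ k]
    simp [pd, ContinuousLinearMap.sum_apply]
  have hpdinv : ∀ k : Fin 3, pd k (fun y => 1 / Real.sqrt (∑ j, (n y j) ^ 2)) x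
      = -(Real.sqrt (∑ j, (n x j) ^ 2) ^ 2)⁻¹ *
          ((1 / (2 * Real.sqrt (∑ j, (n x j) ^ 2))) *
            ∑ i, 2 * n x i * pd k (fun y => n y i) x) := by
    intro k
    have e : (fun y => 1 / Real.sqrt (∑ j, (n y j) ^ 2))
        = fun y => (Real.sqrt (∑ j, (n y j) ^ 2))⁻¹ := by
      funext y; rw [one_div]
    rw [e, pd_hasFDeriv hinv k]
    simp [pd, ContinuousLinearMap.sum_apply, Finset.mul_sum]
  have hpdu : ∀ (k : Fin 3) (j : Fin 3),
      pd k (fun y => n y j / Real.sqrt (∑ i, (n y i) ^ 2)) x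
        = n x j * (-(Real.sqrt (∑ i, (n x i) ^ 2) ^ 2)⁻¹ *
            ((1 / (2 * Real.sqrt (∑ i, (n x i) ^ 2))) *
              ∑ i, 2 * n x i * pd k (fun y => n y i) x))
          + (Real.sqrt (∑ i, (n x i) ^ 2))⁻¹ * pd k (fun y => n y j) x := by
    intro k j
    rw [pd_hasFDeriv (hu j) k]
    simp [pd, ContinuousLinearMap.sum_apply, Finset.mul_sum]
  simp only [Gfun, curl3, grad, dot2, Fin.sum_univ_two, Fin.sum_univ_three,
    Fin.castSucc_zero, Fin.castSucc_one, Matrix.cons_val_zero, Matrix.cons_val_one,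
    Matrix.head_cons, Matrix.cons_val_two, Matrix.tail_cons] at *
  simp only [hpdu, hpdinv, hpdQ, Fin.sum_univ_three] at *
  set N0 := n x 0 with hN0
  set N1 := n x 1 with hN1
  set N2 := n x 2 with hN2
  set A00 := pd 0 (fun y => n y 0) x with hA00
  set A01 := pd 0 (fun y => n y 1) x with hA01
  set A02 := pd 0 (fun y => n y 2) x with hA02
  set A10 := pd 1 (fun y => n y 0) x with hA10
  set A11 := pd 1 (fun y => n y 1) x with hA11
  set A12 := pd 1 (fun y => n y 2) x with hA12
  set h0 := pd 0 V x with hh0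
  set h1 := pd 1 V x with hh1
  set R := Real.sqrt (N0 ^ 2 + N1 ^ 2 + N2 ^ 2) with hRdef
  have hq : R ^ 2 = N0 ^ 2 + N1 ^ 2 + N2 ^ 2 := Real.sq_sqrt hQpos.le
  rw [← hq]
  field_simp
  linear_combination (-(2:ℝ) * R ^ 4
      - ((N0 * A00 + N1 * A01 + N2 * A02) ^ 2
          + (N0 * A10 + N1 * A11 + N2 * A12) ^ 2)) * hq
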